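/- Let 𝒢 be a connected undirected graph with vertex set V, P_𝒢 = conv{1_u − 1_v, 1_v − 1_u : uv ∈ E(𝒢)} its symmetric edge polytope, and v ∈ V fixed. Choose q ∈ ℝ^V with q_v > 0, q_u < 0 for all u ≠ v, and Σ_u q_u = 0, scaled so q ∈ P_𝒢. Then for any oriented spanning tree T of 𝒢 and edge e ∈ T, the facet conv({0} ∪ {x_f : f ∈ T − e}) of the simplex conv({0} ∪ {x_f : f ∈ T}) is visible from q if and only if e points away from v in T. -/

import Mathlib

open Set Pointwise

noncomputable section

/-- A point of `ℝ^V` is a lattice point if all its coordinates are integers. -/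
def isLattice {ι : Type*} (x : ι → ℝ) : Prop := ∀ i, ∃ z : ℤ, x i = (z : ℝ)

/-- The vector `x_e = 1_h - 1_t ∈ ℝ^V` of a directed edge `e = (t, h)`. -/
def edgeVec {V : Type*} [DecidableEq V] (e : V × V) : V → ℝ :=
  fun u => (if u = e.2 then (1 : ℝ) else 0) - (if u = e.1 then (1 : ℝ) else 0)

/-- The undirected (simple) graph underlying a set of directed edges. -/
def undirected {V : Type*} (A : Set (V × V)) : SimpleGraph V :=
  SimpleGraph.fromEdgeSet ((fun e : V × V => s(e.1, e.2)) '' A)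

/-- A set of directed edges is a spanning tree if its edges are loopless and pairwise
distinct as undirected edges, and the underlying undirected graph is connected and
acyclic (hence a spanning tree of the complete graph on `V`). -/
def IsSpanningTree {V : Type*} (T : Set (V × V)) : Prop :=
  (∀ e ∈ T, e.1 ≠ e.2) ∧ Set.InjOn (fun e : V × V => s(e.1, e.2)) T ∧
    (undirected T).Connected ∧ (undirected T).IsAcyclic

/-- The shore of the fundamental cut of `e ∈ T` containing the head of `e`: the vertex
set of the component of `T - e` containing the head of `e`. -/
def shore1 {V : Type*} (T : Set (V × V)) (e : V × V) : Set V :=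
  {u | (undirected (T \ {e})).Reachable e.2 u}

/-- The fundamental cut `C*(T, e)`: edges of `E` connecting the two shores of `T - e`. -/
def fundCut {V : Type*} (E T : Set (V × V)) (e : V × V) : Set (V × V) :=
  {f ∈ E | ¬ ((f.1 ∈ shore1 T e) ↔ (f.2 ∈ shore1 T e))}

/-- An edge `f` of the fundamental cut `C*(T, e)` stands parallel to `e` if its head is
on the same shore as the head of `e`. -/
def standsParallel {V : Type*} (T : Set (V × V)) (e f : V × V) : Prop :=
  f.2 ∈ shore1 T e

/-- The linear functional `h : ℝ^V → ℝ` with `h(1_u) = 1` for `u` on the head shore of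
the fundamental cut of `e ∈ T` and `h(1_u) = 0` on the other shore. -/
def cutFunctional {V : Type*} [Fintype V] (T : Set (V × V)) (e : V × V) (x : V → ℝ) : ℝ :=
  ∑ u, (shore1 T e).indicator x u

/-- An edge `e` of a directed tree `T` points away from `v` if `v` lies in the component
of `T - e` containing the tail of `e`. -/
def pointsAway {V : Type*} (T : Set (V × V)) (e : V × V) (v : V) : Prop :=
  (undirected (T \ {e})).Reachable e.1 v

/-- `e ∈ T` is internally semi-passive w.r.t. the edge order `ord` if the `ord`-maximal
edge of the fundamental cut `C*(T, e)` stands opposite to `e`. -/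
def semiPassive {V : Type*} (E T : Set (V × V)) (ord : V × V → ℕ) (e : V × V) : Prop :=
  ∃ f ∈ fundCut E T e, (∀ g ∈ fundCut E T e, ord g ≤ ord f) ∧ ¬ standsParallel T e f

/-- The symmetric edge polytope of an undirected graph. -/
def symEdgePolytope {V : Type*} [Fintype V] [DecidableEq V] (G : SimpleGraph V) :
    Set (V → ℝ) :=
  convexHull ℝ {x | ∃ u v, G.Adj u v ∧ x = edgeVec (u, v)}

/-- The root polytope of a digraph with edge set `E`. -/
def rootPolytope {V : Type*} [Fintype V] [DecidableEq V] (E : Set (V × V)) :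
    Set (V → ℝ) :=
  convexHull ℝ (edgeVec '' E)

open scoped Classical

section Helpers

variable {V : Type*} [DecidableEq V]

lemma edgeVec_apply (e : V × V) (u : V) :
    edgeVec e u = (if u = e.2 then (1 : ℝ) else 0) - (if u = e.1 then (1 : ℝ) else 0) := rfl

lemma edgeVec_loop (a : V) : edgeVec (a, a) = 0 := by
  funext u; simp [edgeVec_apply]

lemma edgeVec_injOn {T : Set (V × V)} (hl : ∀ f ∈ T, f.1 ≠ f.2) :
    Set.InjOn (edgeVec (V := V)) T := by
  intro f hf g hg hfg
  have hfne := hl f hf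
  have hfne' : f.2 ≠ f.1 := hfne.symm
  have h2 : (if f.2 = g.2 then (1:ℝ) else 0) - (if f.2 = g.1 then (1:ℝ) else 0) = 1 := by
    rw [← edgeVec_apply, ← hfg, edgeVec_apply]; simp [hfne']
  have h1 : (if f.1 = g.2 then (1:ℝ) else 0) - (if f.1 = g.1 then (1:ℝ) else 0) = -1 := by
    rw [← edgeVec_apply, ← hfg, edgeVec_apply]; simp [hfne]
  have h22 : f.2 = g.2 := by split_ifs at h2 <;> first | assumption | norm_num at h2
  have h11 : f.1 = g.1 := by split_ifs at h1 <;> first | assumption | norm_num at h1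
  exact Prod.ext h11 h22

variable [Fintype V]

/-- The cut functional as a linear map. -/
def cutL (T : Set (V × V)) (e : V × V) : (V → ℝ) →ₗ[ℝ] ℝ where
  toFun := cutFunctional T e
  map_add' x y := by
    show (∑ u, _) = (∑ u, _) + (∑ u, _)
    rw [← Finset.sum_add_distrib]
    exact Finset.sum_congr rfl fun u _ => by
      by_cases h : u ∈ shore1 T e <;> simp [Set.indicator_apply, h]
  map_smul' c x := by
    show (∑ u, _) = _
    simp only [RingHom.id_apply, smul_eq_mul]
    rw [cutFunctional, Finset.mul_sum]
    exact Finset.sum_congr rfl fun u _ => by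
      by_cases h : u ∈ shore1 T e <;> simp [Set.indicator_apply, h]

lemma cutL_edgeVec (T : Set (V × V)) (e f : V × V) :
    cutL T e (edgeVec f) = (if f.2 ∈ shore1 T e then (1:ℝ) else 0)
      - (if f.1 ∈ shore1 T e then (1:ℝ) else 0) := by
  have key : ∀ u, (shore1 T e).indicator (edgeVec f) u
      = (if u = f.2 then (if f.2 ∈ shore1 T e then (1:ℝ) else 0) else 0)
        - (if u = f.1 then (if f.1 ∈ shore1 T e then (1:ℝ) else 0) else 0) := by
    intro u
    rw [Set.indicator_apply, edgeVec_apply]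
    split_ifs <;> simp_all <;> norm_num
  show cutFunctional T e (edgeVec f) = _
  rw [cutFunctional, Finset.sum_congr rfl fun u _ => key u, Finset.sum_sub_distrib,
    Finset.sum_ite_eq' Finset.univ f.2, Finset.sum_ite_eq' Finset.univ f.1]
  simp

end Helpers
section Arith

private lemma arith0 {w D : ℝ} (hw1 : w ≤ 1) (hD0 : 0 ≤ D) : w / (2 * (D + 1)) < 1 := by
  rw [div_lt_one (by linarith)]; linarith

private lemma arith1 {w D df : ℝ} (hw0 : 0 < w) (hw1 : w ≤ 1) (hD0 : 0 ≤ D)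
    (habs : |df| ≤ D) :
    0 ≤ (1 - w / (2 * (D + 1))) * w + w / (2 * (D + 1)) * df := by
  have hd1 : (0:ℝ) < D + 1 := by linarith
  set s : ℝ := w / (2 * (D + 1)) with hs
  have hs0 : 0 < s := by positivity
  have hkey : s * (D + 1) = w / 2 := by rw [hs]; field_simp
  have hsh : s ≤ 1 / 2 := by
    rw [hs, div_le_div_iff₀ (by linarith) (by norm_num)]; linarith
  have h1 : -|df| ≤ df := neg_abs_le _
  have h2 : s * |df| ≤ s * D := mul_le_mul_of_nonneg_left habs hs0.le
  have h3 : -(s * |df|) ≤ s * df := by nlinarith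
  have h4 : s * w ≤ (1/2) * w := mul_le_mul_of_nonneg_right hsh hw0.le
  nlinarith
  
private lemma arith2 {w D Sd N : ℝ} (hN : 1 ≤ N) (hwN : N * w = 1) (hw0 : 0 < w)
    (hD0 : 0 ≤ D) (hSd : Sd ≤ D) :
    (N - 1) * ((1 - w / (2 * (D + 1))) * w) + w / (2 * (D + 1)) * Sd ≤ 1 := by
  have hd1 : (0:ℝ) < D + 1 := by linarith
  set s : ℝ := w / (2 * (D + 1)) with hs
  have hs0 : 0 < s := by positivity
  have hkey : s * (D + 1) = w / 2 := by rw [hs]; field_simp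
  have h2 : s * Sd ≤ s * D := mul_le_mul_of_nonneg_left hSd hs0.le
  have h5 : (N - 1) * ((1 - s) * w) ≤ (N - 1) * w := by
    nlinarith [mul_nonneg (mul_nonneg (by linarith : (0:ℝ) ≤ N - 1) hs0.le) hw0.le]
  have h6 : s * D ≤ w / 2 := by nlinarith
  nlinarith

end Arith
section Graph

variable {V : Type*} [DecidableEq V]

lemma undirected_adj {A : Set (V × V)} {a b : V} :
    (undirected A).Adj a b ↔ (∃ g ∈ A, s(g.1, g.2) = s(a, b)) ∧ a ≠ b := by
  simp [undirected, SimpleGraph.fromEdgeSet_adj, Set.mem_image]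

lemma head_mem_shore1 (T : Set (V × V)) (e : V × V) : e.2 ∈ shore1 T e :=
  SimpleGraph.Reachable.refl _

lemma tail_not_mem_shore1 {T : Set (V × V)} {e : V × V}
    (hT : IsSpanningTree T) (he : e ∈ T) : e.1 ∉ shore1 T e := by
  obtain ⟨hl, hinj, hconn, hacyc⟩ := hT
  have hne : e.1 ≠ e.2 := hl e he
  have hadj : (undirected T).Adj e.1 e.2 := undirected_adj.mpr ⟨⟨e, he, rfl⟩, hne⟩
  have hbridge := (SimpleGraph.isAcyclic_iff_forall_edge_isBridge.mp hacyc)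
    ((undirected T).mem_edgeSet.mpr hadj)
  have hb2 : ¬ ((undirected T) \ SimpleGraph.fromEdgeSet {s(e.1, e.2)}).Reachable e.1 e.2 :=
    SimpleGraph.isBridge_iff.mp hbridge
  intro hmem
  apply hb2
  have hle : undirected (T \ {e}) ≤ (undirected T) \ SimpleGraph.fromEdgeSet {s(e.1, e.2)} := by
    intro a b hab
    obtain ⟨⟨g, hg, hgs⟩, hne'⟩ := undirected_adj.mp hab
    refine ⟨undirected_adj.mpr ⟨⟨g, hg.1, hgs⟩, hne'⟩, ?_⟩
    rw [SimpleGraph.fromEdgeSet_adj]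
    rintro ⟨hcontra, -⟩
    rw [Set.mem_singleton_iff] at hcontra
    exact hg.2 (hinj hg.1 he (hgs.trans hcontra))
  exact ((hmem : (undirected (T \ {e})).Reachable e.2 e.1).mono hle).symm

lemma shore_cover {T : Set (V × V)} {e : V × V}
    (hT : IsSpanningTree T) (he : e ∈ T) (u : V) :
    (undirected (T \ {e})).Reachable e.1 u ∨ (undirected (T \ {e})).Reachable e.2 u := by
  obtain ⟨hl, hinj, hconn, hacyc⟩ := hT
  obtain ⟨w⟩ := hconn.preconnected e.2 u
  have H : ∀ a b : V, (undirected T).Walk a b →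
      ((undirected (T \ {e})).Reachable e.1 a ∨ (undirected (T \ {e})).Reachable e.2 a) →
      ((undirected (T \ {e})).Reachable e.1 b ∨ (undirected (T \ {e})).Reachable e.2 b) := by
    intro a b w
    induction w with
    | nil => exact id
    | @cons x y z hadj p ih =>
      intro hx
      apply ih
      obtain ⟨⟨g, hg, hgs⟩, hne⟩ := undirected_adj.mp hadj
      by_cases hge : g = e
      · subst hge
        rcases Sym2.eq_iff.mp hgs with ⟨h1, h2⟩ | ⟨h1, h2⟩
        · exact Or.inr (h2 ▸ SimpleGraph.Reachable.refl _)
        · exact Or.inl (h1 ▸ SimpleGraph.Reachable.refl _)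
      · have hadj' : (undirected (T \ {e})).Adj x y :=
          undirected_adj.mpr ⟨⟨g, ⟨hg, hge⟩, hgs⟩, hne⟩
        rcases hx with h | h
        · exact Or.inl (h.trans hadj'.reachable)
        · exact Or.inr (h.trans hadj'.reachable)
  exact H e.2 u w (Or.inr (SimpleGraph.Reachable.refl _))

variable [Fintype V]

lemma edgeVec_mem_span {T : Set (V × V)} {a b : V} (h : (undirected T).Reachable a b) :
    edgeVec (a, b) ∈ Submodule.span ℝ (edgeVec '' T) := by
  obtain ⟨w⟩ := h
  induction w with
  | nil => simpa [edgeVec_loop] using Submodule.zero_mem _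
  | @cons x y z hadj p ih =>
    have hsplit : edgeVec (x, z) = edgeVec (x, y) + edgeVec (y, z) := by
      funext u; simp [edgeVec_apply]; try ring
    rw [hsplit]
    refine Submodule.add_mem _ ?_ ih
    obtain ⟨⟨g, hg, hgs⟩, hne⟩ := undirected_adj.mp hadj
    rcases Sym2.eq_iff.mp hgs with ⟨h1, h2⟩ | ⟨h1, h2⟩
    · have hgx : edgeVec (x, y) = edgeVec g := by
        rw [← h1, ← h2]
      exact hgx ▸ Submodule.subset_span ⟨g, hg, rfl⟩
    · have hgx : edgeVec (x, y) = -edgeVec g := by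
        funext u; simp [edgeVec_apply, ← h1, ← h2]; try ring
      rw [hgx]
      exact Submodule.neg_mem _ (Submodule.subset_span ⟨g, hg, rfl⟩)

lemma q_mem_span {T : Set (V × V)} (hconn : (undirected T).Connected)
    {q : V → ℝ} (v : V) (hqsum : ∑ u, q u = 0) :
    q ∈ Submodule.span ℝ (edgeVec '' T) := by
  have hq : q = ∑ u, q u • edgeVec (v, u) := by
    funext i
    simp only [Finset.sum_apply, Pi.smul_apply, edgeVec_apply, smul_eq_mul]
    have hterm : ∀ u : V, q u * ((if i = u then (1:ℝ) else 0) - (if i = v then 1 else 0))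
        = (if i = u then q u else 0) - (if i = v then (1:ℝ) else 0) * q u := by
      intro u; split_ifs <;> ring
    rw [Finset.sum_congr rfl fun u _ => hterm u, Finset.sum_sub_distrib,
      Finset.sum_ite_eq Finset.univ i q, ← Finset.mul_sum, hqsum]
    simp
  rw [hq]
  exact Submodule.sum_mem _ fun u _ =>
    Submodule.smul_mem _ _ (edgeVec_mem_span (hconn.preconnected v u))

end Graph
set_option maxHeartbeats 1000000 in
/-- for the chosen interior point `q` of the symmetric edge polytope
(positive coordinate at `v`, negative elsewhere, coordinate sum zero), a facet
`conv({0} ∪ {x_f : f ∈ T - e})` of a spanning-tree simplex `conv({0} ∪ {x_f : f ∈ T})`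
is visible from `q` iff `e` points away from `v` in `T`. -/
theorem stmt9 {V : Type*} [Fintype V] [DecidableEq V] (G : SimpleGraph V)
    (hG : G.Connected) (v : V) (q : V → ℝ)
    (hqv : 0 < q v) (hqu : ∀ u, u ≠ v → q u < 0) (hqsum : ∑ u, q u = 0)
    (hqP : q ∈ symEdgePolytope G)
    (T : Set (V × V)) (hTG : ∀ e ∈ T, G.Adj e.1 e.2) (hT : IsSpanningTree T)
    (e : V × V) (he : e ∈ T) :
    (∀ x ∈ convexHull ℝ (insert (0 : V → ℝ) (edgeVec '' (T \ {e}))),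
        x ≠ q ∧ openSegment ℝ x q ∩ convexHull ℝ (insert (0 : V → ℝ) (edgeVec '' T)) = ∅)
      ↔ pointsAway T e v := by
  classical
  obtain ⟨hl, hinj, hconn, hacyc⟩ := hT
  set L := cutL T e with hLdef
  have hE2 : e.2 ∈ shore1 T e := head_mem_shore1 T e
  have hE1 : e.1 ∉ shore1 T e := tail_not_mem_shore1 ⟨hl, hinj, hconn, hacyc⟩ he
  have hLe : L (edgeVec e) = 1 := by
    rw [hLdef, cutL_edgeVec, if_pos hE2, if_neg hE1]; ring
  have hLf : ∀ f ∈ T \ {e}, L (edgeVec f) = 0 := by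
    intro f hf
    have hne : f.1 ≠ f.2 := hl f hf.1
    have hadj : (undirected (T \ {e})).Adj f.1 f.2 := undirected_adj.mpr ⟨⟨f, hf, rfl⟩, hne⟩
    have hiff : f.1 ∈ shore1 T e ↔ f.2 ∈ shore1 T e :=
      ⟨fun h => h.trans hadj.reachable, fun h => h.trans hadj.symm.reachable⟩
    rw [hLdef, cutL_edgeVec]
    by_cases h : f.1 ∈ shore1 T e
    · rw [if_pos (hiff.mp h), if_pos h]; ring
    · rw [if_neg (fun h2 => h (hiff.mpr h2)), if_neg h]; ring
  have hLq_eq : L q = ∑ u, (if u ∈ shore1 T e then q u else 0) := by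
    show cutFunctional T e q = _
    rw [cutFunctional]
    exact Finset.sum_congr rfl fun u _ => Set.indicator_apply _ _ _
  have hsimplex : convexHull ℝ (insert (0 : V → ℝ) (edgeVec '' T)) ⊆ {z | 0 ≤ L z} := by
    apply convexHull_min _ (convex_halfSpace_ge (LinearMap.isLinear L) 0)
    rintro z (rfl | ⟨f, hf, rfl⟩)
    · simp
    · by_cases hf' : f = e
      · subst hf'; rw [Set.mem_setOf_eq, hLe]; norm_num
      · rw [Set.mem_setOf_eq, hLf f ⟨hf, hf'⟩]
  have hfacet : convexHull ℝ (insert (0 : V → ℝ) (edgeVec '' (T \ {e}))) ⊆ {z | L z = 0} := by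
    apply convexHull_min _ (convex_hyperplane (LinearMap.isLinear L) 0)
    rintro z (rfl | ⟨f, hf, rfl⟩)
    · simp
    · exact hLf f hf
  constructor
  · -- visible → pointsAway
    intro hvis
    by_contra hpa
    have hvS : v ∈ shore1 T e := (shore_cover ⟨hl, hinj, hconn, hacyc⟩ he v).resolve_left hpa
    have hLq : 0 < L q := by
      have hsum : L q + ∑ u, (if u ∈ shore1 T e then (0:ℝ) else q u) = 0 := by
        have hterm : ∑ u, ((if u ∈ shore1 T e then q u else 0) + (if u ∈ shore1 T e then (0:ℝ) else q u)) = ∑ u, q u :=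
          Finset.sum_congr rfl fun u _ => by by_cases h : u ∈ shore1 T e <;> simp [h]
        rw [hLq_eq, ← Finset.sum_add_distrib, hterm, hqsum]
      have hneg : ∑ u, (if u ∈ shore1 T e then (0:ℝ) else q u) < ∑ _u : V, (0:ℝ) := by
        refine Finset.sum_lt_sum (fun u _ => ?_) ⟨e.1, Finset.mem_univ _, ?_⟩
        · by_cases h : u ∈ shore1 T e
          · rw [if_pos h]
          · rw [if_neg h]; exact (hqu u (fun huv => h (huv ▸ hvS))).le
        · rw [if_neg hE1]; exact hqu e.1 (fun h1 => hE1 (h1 ▸ hvS))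
      rw [Finset.sum_const, smul_zero] at hneg
      linarith
    -- representation of q in the tree basis
    set A : Finset (V × V) := (Set.toFinite T).toFinset with hA
    have hAmem : ∀ f, f ∈ A ↔ f ∈ T := fun f => Set.Finite.mem_toFinset _
    have heA : e ∈ A := (hAmem e).mpr he
    have hqspan : q ∈ Submodule.span ℝ (edgeVec '' T) := q_mem_span hconn v hqsum
    have himage : edgeVec '' T = ↑(A.image edgeVec) := by
      rw [Finset.coe_image, Set.Finite.coe_toFinset]
    rw [himage, Submodule.mem_span_finset] at hqspan
    obtain ⟨cc, -, hcc⟩ := hqspan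
    set d : (V × V) → ℝ := fun f => cc (edgeVec f) with hd
    have hrep : ∑ f ∈ A, d f • edgeVec f = q := by
      have hinj2 : ∀ x ∈ A, ∀ y ∈ A, edgeVec x = edgeVec y → x = y :=
        fun x hx y hy hxy => edgeVec_injOn hl ((hAmem x).mp hx) ((hAmem y).mp hy) hxy
      rw [Finset.sum_image hinj2] at hcc
      exact hcc
    have hde : d e = L q := by
      have h1 : L q = ∑ f ∈ A, d f * L (edgeVec f) := by
        rw [← hrep, map_sum]
        exact Finset.sum_congr rfl fun f _ => by rw [map_smul]; simp
      have h2 : ∀ f ∈ A, d f * L (edgeVec f) = if f = e then d f else 0 := by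
        intro f hf
        by_cases hfe : f = e
        · subst hfe; rw [if_pos rfl, hLe, mul_one]
        · rw [if_neg hfe, hLf f ⟨(hAmem f).mp hf, hfe⟩, mul_zero]
      rw [h1, Finset.sum_congr rfl h2, Finset.sum_ite_eq' A e, if_pos heA]
    -- the small parameter
    set N : ℕ := A.card with hN
    have hN0 : 0 < N := Finset.card_pos.mpr ⟨e, heA⟩
    have hNR : (1:ℝ) ≤ (N:ℝ) := by exact_mod_cast hN0
    set w : ℝ := ((N:ℝ))⁻¹ with hw
    have hw0 : 0 < w := by positivity
    have hwN : (N:ℝ) * w = 1 := mul_inv_cancel₀ (by positivity)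
    have hw1 : w ≤ 1 := by
      rw [hw]; rw [inv_le_one_iff₀]; right; exact hNR
    set D : ℝ := ∑ f ∈ A, |d f| with hD
    have hD0 : 0 ≤ D := Finset.sum_nonneg fun f _ => abs_nonneg _
    set s₀ : ℝ := w / (2 * (D + 1)) with hs
    have hs0 : 0 < s₀ := by positivity
    have hs1 : s₀ < 1 := by rw [hs]; exact arith0 hw1 hD0
    -- loop vertex used to encode the origin
    set loop : V × V := (e.2, e.2) with hloop
    have hloopA : loop ∉ A := fun h => (hl _ ((hAmem _).mp h)) rfl
    have hloopE : edgeVec loop = 0 := edgeVec_loop e.2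
    -- barycenter of the facet
    set x : V → ℝ := ∑ f ∈ A.erase e, w • edgeVec f with hx
    have hcard : (insert loop (A.erase e)).card = N := by
      rw [Finset.card_insert_of_notMem (fun h => hloopA (Finset.mem_of_mem_erase h)),
        Finset.card_erase_of_mem heA]
      omega
    have hx_mem : x ∈ convexHull ℝ (insert (0 : V → ℝ) (edgeVec '' (T \ {e}))) := by
      have hxsum : x = ∑ f ∈ insert loop (A.erase e), w • edgeVec f := by
        rw [Finset.sum_insert (fun h => hloopA (Finset.mem_of_mem_erase h)), hloopE,
          smul_zero, zero_add]
      rw [hxsum]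
      refine Convex.sum_mem (convex_convexHull ℝ _) (fun f _ => hw0.le) ?_ ?_
      · rw [Finset.sum_const, hcard, nsmul_eq_mul, hwN]
      · intro f hf
        apply subset_convexHull
        rcases Finset.mem_insert.mp hf with rfl | hf'
        · rw [hloopE]; exact Set.mem_insert _ _
        · exact Set.mem_insert_of_mem _
            ⟨f, ⟨(hAmem f).mp (Finset.mem_of_mem_erase hf'), Finset.ne_of_mem_erase hf'⟩, rfl⟩
    -- the witness point on the open segment
    set c : (V × V) → ℝ := fun f => (if f = e then 0 else (1 - s₀) * w) + s₀ * d f with hc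
    set p : V → ℝ := ∑ f ∈ A, c f • edgeVec f with hp
    have hp_eq : p = (1 - s₀) • x + s₀ • q := by
      rw [hp, hx, ← hrep, Finset.smul_sum, Finset.smul_sum]
      have h1 : ∀ f ∈ A, c f • edgeVec f
          = (if f = e then 0 else (1 - s₀) * w) • edgeVec f + (s₀ * d f) • edgeVec f := by
        intro f _; simp only [hc]; rw [add_smul]
      rw [Finset.sum_congr rfl h1, Finset.sum_add_distrib]
      congr 1
      · rw [← Finset.sum_erase A (a := e) (by rw [if_pos rfl, zero_smul])]
        refine Finset.sum_congr rfl fun f hf => ?_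
        rw [if_neg (Finset.ne_of_mem_erase hf), smul_smul]
      · exact Finset.sum_congr rfl fun f _ => by rw [smul_smul]
    have habs : ∀ f ∈ A, |d f| ≤ D :=
      fun f hf => Finset.single_le_sum (fun i _ => abs_nonneg (d i)) hf
    have hc0 : ∀ f ∈ A, 0 ≤ c f := by
      intro f hf
      simp only [hc]
      by_cases hfe : f = e
      · subst hfe
        rw [if_pos rfl, zero_add]
        exact (mul_pos hs0 (hde ▸ hLq)).le
      · rw [if_neg hfe, hs]
        exact arith1 hw0 hw1 hD0 (habs f hf)
    have hcsum : ∑ f ∈ A, c f ≤ 1 := by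
      have hsplit : ∑ f ∈ A, c f
          = (∑ f ∈ A, (if f = e then 0 else (1 - s₀) * w)) + s₀ * ∑ f ∈ A, d f := by
        simp only [hc]; rw [Finset.sum_add_distrib, Finset.mul_sum]
      have hfirst : (∑ f ∈ A, (if f = e then 0 else (1 - s₀) * w)) = ((N:ℝ) - 1) * ((1 - s₀) * w) := by
        rw [← Finset.sum_erase A (a := e) (by rw [if_pos rfl])]
        rw [Finset.sum_congr rfl fun f hf => if_neg (Finset.ne_of_mem_erase hf),
          Finset.sum_const, Finset.card_erase_of_mem heA, nsmul_eq_mul]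
        congr 1
        rw [Nat.cast_sub hN0]
        norm_num
      have hSd : ∑ f ∈ A, d f ≤ D := Finset.sum_le_sum fun f _ => le_abs_self _
      rw [hsplit, hfirst, hs]
      exact arith2 hNR hwN hw0 hD0 hSd
    have hp_mem : p ∈ convexHull ℝ (insert (0 : V → ℝ) (edgeVec '' T)) := by
      set c' : (V × V) → ℝ := fun f => if f = loop then 1 - ∑ g ∈ A, c g else c f with hc'
      have hne_loop : ∀ f, f ∈ A → f ≠ loop := fun f hf h => hloopA (h ▸ hf)
      have hc'loop : c' loop = 1 - ∑ g ∈ A, c g := by simp only [hc', if_pos]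
      have hc'mem : ∀ f ∈ A, c' f = c f := fun f hf => by
        simp only [hc']; rw [if_neg (hne_loop f hf)]
      have hp2 : p = ∑ f ∈ insert loop A, c' f • edgeVec f := by
        rw [Finset.sum_insert hloopA, hloopE, smul_zero, zero_add, hp]
        exact Finset.sum_congr rfl fun f hf => by rw [hc'mem f hf]
      rw [hp2]
      refine Convex.sum_mem (convex_convexHull ℝ _) ?_ ?_ ?_
      · intro f hf
        rcases Finset.mem_insert.mp hf with rfl | hf'
        · rw [hc'loop]; linarith
        · rw [hc'mem f hf']; exact hc0 f hf'
      · rw [Finset.sum_insert hloopA, hc'loop, Finset.sum_congr rfl hc'mem]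
        ring
      · intro f hf
        apply subset_convexHull
        rcases Finset.mem_insert.mp hf with rfl | hf'
        · rw [hloopE]; exact Set.mem_insert _ _
        · exact Set.mem_insert_of_mem _ ⟨f, (hAmem f).mp hf', rfl⟩
    have hpseg : p ∈ openSegment ℝ x q :=
      ⟨1 - s₀, s₀, by linarith, hs0, by ring, hp_eq.symm⟩
    obtain ⟨hxq, hemp⟩ := hvis x hx_mem
    exact absurd (Set.mem_inter hpseg hp_mem) (by rw [hemp]; exact Set.notMem_empty p)
  · -- pointsAway → visible
    intro hpa x hx
    have hvS : v ∉ shore1 T e := fun h => hE1 (h.trans hpa.symm)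
    have hLq : L q < 0 := by
      rw [hLq_eq]
      have hlt : ∑ u, (if u ∈ shore1 T e then q u else 0) < ∑ _u : V, (0:ℝ) := by
        refine Finset.sum_lt_sum (fun u _ => ?_) ⟨e.2, Finset.mem_univ _, ?_⟩
        · by_cases h : u ∈ shore1 T e
          · rw [if_pos h]; exact (hqu u (fun huv => hvS (huv ▸ h))).le
          · rw [if_neg h]
        · rw [if_pos hE2]; exact hqu e.2 (fun h2 => hvS (h2 ▸ hE2))
      rw [Finset.sum_const, smul_zero] at hlt
      exact hlt
    have hx0 : L x = 0 := hfacet hx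
    constructor
    · intro heq
      rw [heq] at hx0
      exact absurd hx0 (ne_of_lt hLq)
    · rw [Set.eq_empty_iff_forall_notMem]
      rintro p ⟨hp1, hp2⟩
      obtain ⟨a, b, ha, hb, hab, rfl⟩ := hp1
      have h0 : 0 ≤ L (a • x + b • q) := hsimplex hp2
      rw [map_add, map_smul, map_smul, hx0, smul_eq_mul, smul_eq_mul, mul_zero, zero_add] at h0
      exact absurd h0 (not_le.mpr (mul_neg_of_pos_of_neg hb hLq))
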